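/- Let f : ℝ² → ℝ be homogeneous (f(λz) = λ f(z) for all λ ∈ ℝ, z ∈ ℝ²) and suppose f(z₁ + p, z₂) = f(z₁, z₂) + f(p, 0) whenever p ≥ 0 and z₂ > 0. Then f(z₁, z₂) = f(1,0)·z₁ + f(0,1)·z₂ for all (z₁, z₂) with z₁·z₂ ≥ 0. -/
import Mathlib


theorem stmt_6 (f : ℝ × ℝ → ℝ)
    (hhom : ∀ l : ℝ, ∀ z : ℝ × ℝ, f (l * z.1, l * z.2) = l * f z)
    (hadd : ∀ p : ℝ, 0 ≤ p → ∀ z₁ z₂ : ℝ, 0 < z₂ →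
      f (z₁ + p, z₂) = f (z₁, z₂) + f (p, 0))
    (z₁ z₂ : ℝ) (hz : z₁ * z₂ ≥ 0) :
    f (z₁, z₂) = f (1, 0) * z₁ + f (0, 1) * z₂ := by
  have h10 : ∀ a : ℝ, f (a, 0) = f (1, 0) * a := by
    intro a
    have := hhom a (1, 0)
    simp at this
    rw [this, mul_comm]
  have h01 : ∀ b : ℝ, f (0, b) = f (0, 1) * b := by
    intro b
    have := hhom b (0, 1)
    simp at this
    rw [this, mul_comm]
  have key : ∀ a b : ℝ, 0 ≤ a → 0 < b → f (a, b) = f (1, 0) * a + f (0, 1) * b := by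
    intro a b ha hb
    have := hadd a ha 0 b hb
    rw [zero_add] at this
    rw [this, h10, h01]; ring
  rcases lt_trichotomy z₂ 0 with h2 | h2 | h2
  · have h1 : z₁ ≤ 0 := by nlinarith
    have := key (-z₁) (-z₂) (by linarith) (by linarith)
    have hn := hhom (-1) (z₁, z₂)
    simp only [neg_one_mul] at hn
    rw [this] at hn
    linarith [hn]
  · subst h2; rw [h10]; ring
  · have h1 : 0 ≤ z₁ := by nlinarith
    exact key z₁ z₂ h1 h2
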